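/- Let E be a finite-dimensional real inner product space, let g : E → ℝ be differentiable and strongly convex with constant μ > 0 (i.e., g(y) ≥ g(x) + ⟪∇g(x), y - x⟫ + μ‖y - x‖² for all x, y), let h : E → ℝ be convex and differentiable with ∇h Lipschitz continuous with constant L_h, and set f = g - h. Suppose f(x) ≥ f_low for all x ∈ E for some f_low ∈ ℝ. Let (x_k)_{k≥0} be DCA iterates, i.e., for every k, x_{k+1} is a global minimizer of x ↦ g(x) - ⟪∇h(x_k), x - x_k⟫. Then the averaged squared gradient norms over the last half of the iterations converge to zero faster than 1/k: k · (1/(⌊k/2⌋ + 1)) ∑_{i=⌈k/2⌉}^{k} ‖∇f(x_i)‖² → 0 as k → ∞. -/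

import Mathlib

open RealInnerProductSpace

section Aux

variable {E : Type*} [NormedAddCommGroup E] [InnerProductSpace ℝ E] [CompleteSpace E]

lemma aux_hasFDerivAt_inner_sub (c x0 z : E) :
    HasFDerivAt (fun y : E => ⟪c, y - x0⟫) (InnerProductSpace.toDual ℝ E c) z := by
  have h1 : HasFDerivAt (fun y : E => ⟪c, y⟫) (InnerProductSpace.toDual ℝ E c) z := by
    have := (InnerProductSpace.toDual ℝ E c).hasFDerivAt (x := z)
    have he : (fun y : E => ⟪c, y⟫) = ⇑(InnerProductSpace.toDual ℝ E c) := by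
      ext y; simp [InnerProductSpace.toDual_apply_apply]
    rw [he]; exact this
  have h2 := h1.sub_const ⟪c, x0⟫
  simpa [inner_sub_right] using h2

lemma aux_hasGradientAt_sub {g h : E → ℝ} {z : E} (hg : DifferentiableAt ℝ g z)
    (hh : DifferentiableAt ℝ h z) :
    HasGradientAt (fun y => g y - h y) (gradient g z - gradient h z) z := by
  rw [hasGradientAt_iff_hasFDerivAt]
  have h1 := hg.hasGradientAt
  have h2 := hh.hasGradientAt
  rw [hasGradientAt_iff_hasFDerivAt] at h1 h2
  rw [map_sub]; exact h1.sub h2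

lemma aux_convex_grad {h : E → ℝ} (hh : Differentiable ℝ h) (hconv : ConvexOn ℝ Set.univ h)
    (a b : E) : h a + ⟪gradient h a, b - a⟫ ≤ h b := by
  set γ : ℝ →ᵃ[ℝ] E := AffineMap.lineMap a b with hγdef
  have hγ0 : γ (0 : ℝ) = a := by simp [hγdef]
  have hγ1 : γ (1 : ℝ) = b := by simp [hγdef]
  have hq : ConvexOn ℝ Set.univ (h ∘ γ) := by
    simpa using hconv.comp_affineMap γ
  have hγd : HasDerivAt (fun t : ℝ => γ t) (b - a) 0 := by
    simp only [hγdef, AffineMap.coe_lineMap]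
    simpa using ((hasDerivAt_id (0 : ℝ)).smul_const (b - a)).add_const a
  have hfd : HasFDerivAt h (InnerProductSpace.toDual ℝ E (gradient h a)) a := by
    have := (hh a).hasGradientAt
    rwa [hasGradientAt_iff_hasFDerivAt] at this
  have hcomp : HasDerivAt (h ∘ γ) ⟪gradient h a, b - a⟫ 0 := by
    have hfd' : HasFDerivAt h (InnerProductSpace.toDual ℝ E (gradient h a))
        ((fun t : ℝ => γ t) 0) := by simp only [hγ0]; exact hfd
    have := hfd'.comp_hasDerivAt 0 hγd
    simpa [InnerProductSpace.toDual_apply_apply] using this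
  have hs := hq.le_slope_of_hasDerivAt (Set.mem_univ (0 : ℝ)) (Set.mem_univ (1 : ℝ))
    one_pos hcomp
  rw [slope_def_field] at hs
  simp only [Function.comp_apply, hγ0, hγ1] at hs
  norm_num at hs ⊢
  linarith

end Aux

/-- `o(1/k)` rate: the averaged squared gradient norms over the last half of
the DCA iterations, multiplied by `k`, tend to zero. -/
theorem dca_average_grad_sq_little_o
    {E : Type*} [NormedAddCommGroup E] [InnerProductSpace ℝ E] [FiniteDimensional ℝ E]
    (g h : E → ℝ) (μ L : ℝ) (hμ : 0 < μ)
    (hg : Differentiable ℝ g)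
    (hsc : ∀ x y : E, g y ≥ g x + ⟪gradient g x, y - x⟫ + μ * ‖y - x‖ ^ 2)
    (hh : Differentiable ℝ h) (hconv : ConvexOn ℝ Set.univ h)
    (hlip : ∀ x y : E, ‖gradient h x - gradient h y‖ ≤ L * ‖x - y‖)
    (flow : ℝ) (hflow : ∀ x : E, g x - h x ≥ flow)
    (x : ℕ → E)
    (hmin : ∀ k : ℕ, ∀ y : E,
      g (x (k + 1)) - ⟪gradient h (x k), x (k + 1) - x k⟫ ≤
        g y - ⟪gradient h (x k), y - x k⟫) :
    Filter.Tendsto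
      (fun k : ℕ => (k : ℝ) *
        ((1 / ((k / 2 : ℕ) + 1 : ℝ)) *
          ∑ i ∈ Finset.Icc ((k + 1) / 2) k, ‖gradient (fun y => g y - h y) (x i)‖ ^ 2))
      Filter.atTop (nhds 0) := by
  classical
  set a : ℕ → ℝ := fun k => g (x k) - h (x k) with ha
  -- first-order optimality: ∇g (x (k+1)) = ∇h (x k)
  have key : ∀ k, gradient g (x (k + 1)) = gradient h (x k) := by
    intro k
    set c := gradient h (x k) with hc
    have hφ : HasFDerivAt (fun y => g y - ⟪c, y - x k⟫)
        (InnerProductSpace.toDual ℝ E (gradient g (x (k + 1)) - c)) (x (k + 1)) := by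
      have h1 := (hg (x (k + 1))).hasGradientAt
      rw [hasGradientAt_iff_hasFDerivAt] at h1
      have h2 := aux_hasFDerivAt_inner_sub c (x k) (x (k + 1))
      rw [map_sub]; exact h1.sub h2
    have hlocmin : IsLocalMin (fun y => g y - ⟪c, y - x k⟫) (x (k + 1)) :=
      Filter.Eventually.of_forall (hmin k)
    have hz := hlocmin.hasFDerivAt_eq_zero hφ
    have h0 : gradient g (x (k + 1)) - c = 0 := by
      have := congrArg (InnerProductSpace.toDual ℝ E).symm hz
      simpa only [LinearIsometryEquiv.symm_apply_apply, map_zero] using this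
    exact sub_eq_zero.mp h0
  -- descent inequality
  have hdesc : ∀ k, μ * ‖x (k + 1) - x k‖ ^ 2 ≤ a k - a (k + 1) := by
    intro k
    have h1 := hsc (x (k + 1)) (x k)
    rw [key k] at h1
    have h2 := aux_convex_grad hh hconv (x k) (x (k + 1))
    have h3 : ‖x k - x (k + 1)‖ = ‖x (k + 1) - x k‖ := norm_sub_rev _ _
    have h4 : ⟪gradient h (x k), x k - x (k + 1)⟫
        = -⟪gradient h (x k), x (k + 1) - x k⟫ := by
      rw [← inner_neg_right]; congr 1; abel
    rw [h3, h4] at h1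
    simp only [ha]
    linarith
  -- gradient of f
  have hgradf : ∀ z, gradient (fun y => g y - h y) z = gradient g z - gradient h z :=
    fun z => (aux_hasGradientAt_sub (hg z) (hh z)).gradient
  -- per-step bound
  have hstep : ∀ j, ‖gradient (fun y => g y - h y) (x (j + 1))‖ ^ 2
      ≤ L ^ 2 / μ * (a j - a (j + 1)) := by
    intro j
    have e1 : gradient (fun y => g y - h y) (x (j + 1))
        = gradient h (x j) - gradient h (x (j + 1)) := by
      rw [hgradf, key j]
    have e2 : ‖gradient (fun y => g y - h y) (x (j + 1))‖ ≤ L * ‖x j - x (j + 1)‖ := by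
      rw [e1]; exact hlip _ _
    have hn : (0 : ℝ) ≤ ‖gradient (fun y => g y - h y) (x (j + 1))‖ := norm_nonneg _
    have e3 : ‖gradient (fun y => g y - h y) (x (j + 1))‖ ^ 2
        ≤ L ^ 2 * ‖x j - x (j + 1)‖ ^ 2 := by nlinarith [e2, hn]
    rw [norm_sub_rev] at e3
    have e4 := hdesc j
    rw [div_mul_eq_mul_div, le_div_iff₀ hμ]
    nlinarith [e3, e4, sq_nonneg L]
  -- telescoping
  have tele : ∀ m k : ℕ, 1 ≤ m → m ≤ k →
      ∑ i ∈ Finset.Icc m k, (a (i - 1) - a i) = a (m - 1) - a k := by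
    intro m k hm hmk
    induction k, hmk using Nat.le_induction with
    | base => simp
    | succ n hmn ih =>
      rw [Finset.sum_Icc_succ_top (Nat.le_succ_of_le hmn), ih]
      simp only [Nat.add_sub_cancel]
      ring
  -- sum bound
  have hsum : ∀ k : ℕ, 1 ≤ k →
      ∑ i ∈ Finset.Icc ((k + 1) / 2) k, ‖gradient (fun y => g y - h y) (x i)‖ ^ 2
      ≤ L ^ 2 / μ * (a ((k + 1) / 2 - 1) - a k) := by
    intro k hk
    have hm1 : 1 ≤ (k + 1) / 2 := by omega
    have hmk : (k + 1) / 2 ≤ k := by omega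
    calc ∑ i ∈ Finset.Icc ((k + 1) / 2) k, ‖gradient (fun y => g y - h y) (x i)‖ ^ 2
        ≤ ∑ i ∈ Finset.Icc ((k + 1) / 2) k, L ^ 2 / μ * (a (i - 1) - a i) := by
          apply Finset.sum_le_sum
          intro i hi
          have hi1 : 1 ≤ i := le_trans hm1 (Finset.mem_Icc.mp hi).1
          have hstep' := hstep (i - 1)
          have hieq : i - 1 + 1 = i := by omega
          rwa [hieq] at hstep'
      _ = L ^ 2 / μ * (a ((k + 1) / 2 - 1) - a k) := by
          rw [← Finset.mul_sum, tele _ k hm1 hmk]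
  -- monotonicity and limit of a
  have hanti : Antitone a := antitone_nat_of_succ_le fun n => by
    nlinarith [hdesc n, sq_nonneg ‖x (n + 1) - x n‖, norm_nonneg (x (n + 1) - x n)]
  have hbdd : BddBelow (Set.range a) := ⟨flow, by rintro _ ⟨n, rfl⟩; exact hflow (x n)⟩
  have hlim : Filter.Tendsto a Filter.atTop (nhds (⨅ n, a n)) := tendsto_atTop_ciInf hanti hbdd
  have hidx : Filter.Tendsto (fun k : ℕ => (k + 1) / 2 - 1) Filter.atTop Filter.atTop :=
    Filter.tendsto_atTop_atTop.mpr fun b => ⟨2 * b + 2, fun k hk => by omega⟩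
  have hB : Filter.Tendsto
      (fun k : ℕ => 2 * (L ^ 2 / μ) * (a ((k + 1) / 2 - 1) - a k)) Filter.atTop (nhds 0) := by
    have := ((hlim.comp hidx).sub hlim).const_mul (2 * (L ^ 2 / μ))
    simpa using this
  -- squeeze
  apply squeeze_zero' (g := fun k : ℕ => 2 * (L ^ 2 / μ) * (a ((k + 1) / 2 - 1) - a k))
  · apply Filter.Eventually.of_forall
    intro k
    have hSnn : (0 : ℝ) ≤ ∑ i ∈ Finset.Icc ((k + 1) / 2) k,
        ‖gradient (fun y => g y - h y) (x i)‖ ^ 2 :=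
      Finset.sum_nonneg fun i _ => sq_nonneg _
    have hd : (0 : ℝ) < ((k / 2 : ℕ) : ℝ) + 1 := by positivity
    have : (0 : ℝ) ≤ 1 / (((k / 2 : ℕ) : ℝ) + 1) := by positivity
    positivity
  · filter_upwards [Filter.eventually_ge_atTop 1] with k hk
    have hS := hsum k hk
    have hSnn : (0 : ℝ) ≤ ∑ i ∈ Finset.Icc ((k + 1) / 2) k,
        ‖gradient (fun y => g y - h y) (x i)‖ ^ 2 :=
      Finset.sum_nonneg fun i _ => sq_nonneg _
    have hd : (0 : ℝ) < ((k / 2 : ℕ) : ℝ) + 1 := by positivity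
    have hk2n : k ≤ 2 * (k / 2) + 2 := by omega
    have hk2 : (k : ℝ) ≤ 2 * (((k / 2 : ℕ) : ℝ) + 1) := by
      push_cast
      exact_mod_cast hk2n
    have hratio : (k : ℝ) * (1 / (((k / 2 : ℕ) : ℝ) + 1)) ≤ 2 := by
      rw [mul_one_div, div_le_iff₀ hd]
      linarith
    calc (k : ℝ) * ((1 / (((k / 2 : ℕ) : ℝ) + 1)) *
          ∑ i ∈ Finset.Icc ((k + 1) / 2) k, ‖gradient (fun y => g y - h y) (x i)‖ ^ 2)
        = ((k : ℝ) * (1 / (((k / 2 : ℕ) : ℝ) + 1))) *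
          ∑ i ∈ Finset.Icc ((k + 1) / 2) k, ‖gradient (fun y => g y - h y) (x i)‖ ^ 2 := by
          ring
      _ ≤ 2 * ∑ i ∈ Finset.Icc ((k + 1) / 2) k,
            ‖gradient (fun y => g y - h y) (x i)‖ ^ 2 :=
          mul_le_mul_of_nonneg_right hratio hSnn
      _ ≤ 2 * (L ^ 2 / μ * (a ((k + 1) / 2 - 1) - a k)) := by linarith
      _ = 2 * (L ^ 2 / μ) * (a ((k + 1) / 2 - 1) - a k) := by ring
  exact hB
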